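/- Let 𝔷 and Z_* be as in the context with 𝔷([k]) = ζ(-k) for every k ∈ ℕ, and let ζE and Z_EMS be as in the context. Then in ℂ⟦t_1, t_2, t_3⟧: Z_EMS(t_1,t_2,t_3) = Z_*(t_1+t_2+t_3, t_2+t_3, t_3) + Z_*(t_1+t_2+t_3, t_3, t_2+t_3) + Z_*(t_2+t_3, t_1+t_2+t_3, t_3) + Z_*(t_2+t_3, t_3, t_1+t_2+t_3) + Z_*(t_3, t_1+t_2+t_3, t_2+t_3) + Z_*(t_3, t_2+t_3, t_1+t_2+t_3) + Z_*(t_1+t_2+2t_3, t_2+t_3) + Z_*(t_2+t_3, t_1+t_2+2t_3) + Z_*(t_2+2t_3, t_1+t_2+t_3) + Z_*(t_1+t_2+t_3, t_2+2t_3) + Z_*(t_1+2t_2+2t_3, t_3) + Z_*(t_3, t_1+2t_2+2t_3) + Z_*(t_1+2t_2+3t_3). -/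

import Mathlib

open scoped BigOperators

/-- The quasi-shuffle (harmonic) product of two words. -/
def qs {M : Type*} [AddCommMonoid M] : List M → List M → Multiset (List M)
  | [], w => {w}
  | a :: u, [] => {a :: u}
  | a :: u, b :: v =>
      (qs u (b :: v)).map (a :: ·) + (qs (a :: u) v).map (b :: ·) +
        (qs u v).map (fun w => (a + b) :: w)
termination_by u v => u.length + v.length
decreasing_by all_goals (simp; try omega)

/-- The generating series `Z_*(u₁,…,u_m)` of `𝔷`, for power series `uⱼ`
with zero constant term; its coefficient at a monomial `d` is the (finite) sum
`∑_k 𝔷([k₁,…,k_m]) · coeff d (∏ⱼ (-uⱼ)^{kⱼ}/kⱼ!)`. -/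
noncomputable def Zstar {n : ℕ} (z : List ℕ → ℂ) (u : List (MvPowerSeries (Fin n) ℂ)) :
    MvPowerSeries (Fin n) ℂ :=
  fun d => ∑ k ∈ Fintype.piFinset (fun _ : Fin u.length => Finset.range ((∑ i, d i) + 1)),
    z (List.ofFn k) *
      MvPowerSeries.coeff d
        (∏ j : Fin u.length, (((k j).factorial : ℂ))⁻¹ • (-(u.get j)) ^ (k j))


/-- The generating series `Z_EMS(t₁,…,t_r) = ∑_k ζE(-k₁,…,-k_r) ∏ᵢ (-tᵢ)^{kᵢ}/kᵢ!`. -/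
noncomputable def ZEMS (zE : List ℕ → ℂ) (r : ℕ) : MvPowerSeries (Fin r) ℂ :=
  fun d => zE (List.ofFn fun i : Fin r => d i) *
    ∏ i : Fin r, ((-1 : ℂ) ^ (d i) * ((d i).factorial : ℂ)⁻¹)


set_option maxHeartbeats 1000000

open Finset MvPowerSeries

noncomputable def P {n : ℕ} (u : MvPowerSeries (Fin n) ℂ) (k : ℕ) : MvPowerSeries (Fin n) ℂ :=
  ((k.factorial : ℂ))⁻¹ • (-u) ^ k

section infra

def OrdGe {n : ℕ} (f : MvPowerSeries (Fin n) ℂ) (k : ℕ) : Prop :=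
  ∀ d : Fin n →₀ ℕ, (∑ i, d i) < k → MvPowerSeries.coeff d f = 0

lemma sum_apply_add {n : ℕ} (p q : Fin n →₀ ℕ) : (∑ i, (p + q) i) = (∑ i, p i) + (∑ i, q i) := by
  simp [Finsupp.add_apply, Finset.sum_add_distrib]

lemma OrdGe.mul {n : ℕ} {f g : MvPowerSeries (Fin n) ℂ} {kf kg : ℕ}
    (hf : OrdGe f kf) (hg : OrdGe g kg) : OrdGe (f * g) (kf + kg) := by
  intro d hd
  rw [MvPowerSeries.coeff_mul]
  refine Finset.sum_eq_zero fun p hp => ?_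
  rw [Finset.HasAntidiagonal.mem_antidiagonal] at hp
  have h : (∑ i, p.1 i) + (∑ i, p.2 i) < kf + kg := by
    rw [← sum_apply_add, hp]; exact hd
  rcases Nat.lt_or_ge (∑ i, p.1 i) kf with h1 | h1
  · rw [hf _ h1, zero_mul]
  · rw [hg _ (by omega), mul_zero]

lemma ord_pow {n : ℕ} {u : MvPowerSeries (Fin n) ℂ}
    (hu : MvPowerSeries.constantCoeff u = 0) (k : ℕ) : OrdGe (u ^ k) k := by
  induction k with
  | zero => intro d hd; omega
  | succ k ih =>
    rw [pow_succ]
    have h1 : OrdGe u 1 := by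
      intro d hd
      have : d = 0 := by
        ext i
        simp only [Finsupp.coe_zero, Pi.zero_apply]
        have := Finset.single_le_sum (f := fun i => d i) (fun i _ => Nat.zero_le _) (Finset.mem_univ i)
        omega
      subst this
      simpa [MvPowerSeries.coeff_zero_eq_constantCoeff] using hu
    simpa using OrdGe.mul ih h1

lemma ord_P {n : ℕ} {u : MvPowerSeries (Fin n) ℂ}
    (hu : MvPowerSeries.constantCoeff u = 0) (k : ℕ) : OrdGe (P u k) k := by
  intro d hd
  rw [P, map_smul, ord_pow (by simpa using hu) k d hd, smul_zero]



lemma P_add {n : ℕ} (u v : MvPowerSeries (Fin n) ℂ) (k : ℕ) :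
    P (u + v) k = ∑ p ∈ antidiagonal k, P u p.1 * P v p.2 := by
  rw [P, neg_add, Commute.add_pow' (Commute.all _ _)]
  rw [Finset.smul_sum]
  refine Finset.sum_congr rfl fun p hp => ?_
  rw [Finset.HasAntidiagonal.mem_antidiagonal] at hp
  rw [P, P, smul_mul_smul_comm, ← Nat.cast_smul_eq_nsmul ℂ, smul_smul]
  congr 1
  rw [← hp, Nat.cast_choose ℂ (Nat.le_add_right p.1 p.2), Nat.add_sub_cancel_left]
  have h1 : (p.1.factorial : ℂ) ≠ 0 := Nat.cast_ne_zero.2 p.1.factorial_ne_zero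
  have h2 : (p.2.factorial : ℂ) ≠ 0 := Nat.cast_ne_zero.2 p.2.factorial_ne_zero
  have h3 : ((p.1+p.2).factorial : ℂ) ≠ 0 := Nat.cast_ne_zero.2 (p.1+p.2).factorial_ne_zero
  field_simp




lemma Zstar_one {n : ℕ} (z : List ℕ → ℂ) (u : MvPowerSeries (Fin n) ℂ) (d : Fin n →₀ ℕ) :
    Zstar z [u] d = ∑ m ∈ range ((∑ i, d i) + 1), z [m] * MvPowerSeries.coeff d (P u m) := by
  have h : Zstar z [u] d = ∑ k ∈ Fintype.piFinset (fun _ : Fin 1 => range ((∑ i, d i) + 1)),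
      z (List.ofFn k) * MvPowerSeries.coeff d (∏ j : Fin 1, P ([u].get j) (k j)) := rfl
  rw [h]
  refine Finset.sum_bij' (fun k _ => k 0) (fun m _ => fun _ => m) ?_ ?_ ?_ ?_ ?_
  · intro k hk; simpa using (Fintype.mem_piFinset.1 hk) 0
  · intro m hm; simp [Fintype.mem_piFinset]; simpa using hm
  · intro k hk; funext i; fin_cases i; rfl
  · intro m hm; rfl
  · intro k hk
    rw [Fin.prod_univ_one]
    congr 2

lemma Zstar_two {n : ℕ} (z : List ℕ → ℂ) (u v : MvPowerSeries (Fin n) ℂ) (d : Fin n →₀ ℕ) :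
    Zstar z [u, v] d = ∑ a ∈ range ((∑ i, d i) + 1), ∑ b ∈ range ((∑ i, d i) + 1),
      z [a, b] * MvPowerSeries.coeff d (P u a * P v b) := by
  have h : Zstar z [u, v] d = ∑ k ∈ Fintype.piFinset (fun _ : Fin 2 => range ((∑ i, d i) + 1)),
      z (List.ofFn k) * MvPowerSeries.coeff d (∏ j : Fin 2, P ([u, v].get j) (k j)) := rfl
  rw [h, ← Finset.sum_product']
  refine Finset.sum_bij' (fun k _ => (k 0, k 1)) (fun p _ => ![p.1, p.2]) ?_ ?_ ?_ ?_ ?_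
  · intro k hk
    have h := Fintype.mem_piFinset.1 hk
    rw [Finset.mem_product]
    exact ⟨by simpa using h 0, by simpa using h 1⟩
  · intro p hp
    rw [Finset.mem_product] at hp
    rw [Fintype.mem_piFinset]
    intro i; fin_cases i <;> simp <;> [simpa using hp.1; simpa using hp.2]
  · intro k hk; funext i; fin_cases i <;> rfl
  · intro p hp; rfl
  · intro k hk
    rw [Fin.prod_univ_two]
    congr 2

lemma Zstar_three {n : ℕ} (z : List ℕ → ℂ) (u v w : MvPowerSeries (Fin n) ℂ) (d : Fin n →₀ ℕ) :
    Zstar z [u, v, w] d = ∑ a ∈ range ((∑ i, d i) + 1), ∑ b ∈ range ((∑ i, d i) + 1),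
      ∑ c ∈ range ((∑ i, d i) + 1),
      z [a, b, c] * MvPowerSeries.coeff d (P u a * P v b * P w c) := by
  have h : Zstar z [u, v, w] d = ∑ k ∈ Fintype.piFinset (fun _ : Fin 3 => range ((∑ i, d i) + 1)),
      z (List.ofFn k) * MvPowerSeries.coeff d (∏ j : Fin 3, P ([u, v, w].get j) (k j)) := rfl
  rw [h, ← Finset.sum_product', ← Finset.sum_product']
  refine Finset.sum_bij' (fun k _ => ((k 0, k 1), k 2)) (fun p _ => ![p.1.1, p.1.2, p.2]) ?_ ?_ ?_ ?_ ?_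
  · intro k hk
    have h := Fintype.mem_piFinset.1 hk
    rw [Finset.mem_product, Finset.mem_product]
    exact ⟨⟨by simpa using h 0, by simpa using h 1⟩, by simpa using h 2⟩
  · intro p hp
    rw [Finset.mem_product, Finset.mem_product] at hp
    rw [Fintype.mem_piFinset]
    intro i; fin_cases i <;> simp <;> [simpa using hp.1.1; simpa using hp.1.2; simpa using hp.2]
  · intro k hk; funext i; fin_cases i <;> rfl
  · intro p hp; rfl
  · intro k hk
    rw [Fin.prod_univ_three]
    congr 2

lemma merge_sum (D : ℕ) (f : ℕ → ℂ) (g : ℕ → ℕ → ℂ) (h : ∀ m k, D < m + k → g m k = 0) :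
    ∑ m ∈ range (D+1), ∑ k ∈ range (D+1), f (m+k) * g m k
      = ∑ n ∈ range (D+1), f n * ∑ p ∈ antidiagonal n, g p.1 p.2 := by
  have hrhs : ∑ n ∈ range (D+1), f n * ∑ p ∈ antidiagonal n, g p.1 p.2
      = ∑ x ∈ (range (D+1)).sigma (fun n => antidiagonal n), f (x.2.1 + x.2.2) * g x.2.1 x.2.2 := by
    rw [Finset.sum_sigma]
    refine Finset.sum_congr rfl fun n hn => ?_
    rw [Finset.mul_sum]
    refine Finset.sum_congr rfl fun p hp => ?_
    rw [Finset.HasAntidiagonal.mem_antidiagonal] at hp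
    rw [hp]
  rw [hrhs, ← Finset.sum_product']
  rw [show (range (D+1) ×ˢ range (D+1)) = (range (D+1) ×ˢ range (D+1)) from rfl]
  rw [← Finset.sum_filter_add_sum_filter_not (range (D+1) ×ˢ range (D+1))
    (fun p => p.1 + p.2 ≤ D)]
  have h2 : ∑ p ∈ (range (D+1) ×ˢ range (D+1)).filter (fun p => ¬ p.1 + p.2 ≤ D),
      f (p.1 + p.2) * g p.1 p.2 = 0 := by
    refine Finset.sum_eq_zero fun p hp => ?_
    rw [Finset.mem_filter] at hp
    rw [h _ _ (by omega), mul_zero]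
  rw [h2, add_zero]
  refine Finset.sum_nbij' (fun p => ⟨p.1 + p.2, p⟩) (fun x => x.2) ?_ ?_ ?_ ?_ ?_
  · intro p hp
    simp only [Finset.mem_filter, Finset.mem_product, Finset.mem_range] at hp
    simp only [Finset.mem_sigma, Finset.mem_range, Finset.HasAntidiagonal.mem_antidiagonal]
    exact ⟨by omega, trivial⟩
  · rintro ⟨n, p⟩ hx
    simp only [Finset.mem_sigma, Finset.mem_range, Finset.HasAntidiagonal.mem_antidiagonal] at hx
    simp only [Finset.mem_filter, Finset.mem_product, Finset.mem_range]
    omega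
  · intro p hp; rfl
  · rintro ⟨n, p⟩ hx
    simp only [Finset.mem_sigma, Finset.mem_range, Finset.HasAntidiagonal.mem_antidiagonal] at hx
    simp only
    rw [hx.2]
  · intro p hp; rfl
end infra

lemma z_one_one (z : List ℕ → ℂ) (hz : ∀ w w' : List ℕ, z w * z w' = ((qs w w').map z).sum)
    (k l : ℕ) : z [k] * z [l] = z [k, l] + z [l, k] + z [k + l] := by
  rw [hz]; simp [qs]; ring

lemma z_one_two (z : List ℕ → ℂ) (hz : ∀ w w' : List ℕ, z w * z w' = ((qs w w').map z).sum)
    (m k l : ℕ) : z [m] * z [k, l]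
      = z [m, k, l] + z [k, m, l] + z [k, l, m] + z [m + k, l] + z [k, m + l] := by
  rw [hz]; simp [qs]; ring

lemma Zstar_one_ext {n : ℕ} (z : List ℕ → ℂ) {u : MvPowerSeries (Fin n) ℂ}
    (hu : MvPowerSeries.constantCoeff u = 0) (a : Fin n →₀ ℕ) {D : ℕ} (ha : (∑ i, a i) ≤ D) :
    Zstar z [u] a = ∑ m ∈ range (D + 1), z [m] * MvPowerSeries.coeff a (P u m) := by
  rw [Zstar_one]
  refine Finset.sum_subset (fun x hx => ?_) (fun m hm1 hm2 => ?_)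
  · simp only [mem_range] at hx ⊢; omega
  · simp only [mem_range] at hm1 hm2
    rw [ord_P hu m a (by omega), mul_zero]

lemma L1 {n : ℕ} (z : List ℕ → ℂ) (hz : ∀ w w' : List ℕ, z w * z w' = ((qs w w').map z).sum)
    (u v : MvPowerSeries (Fin n) ℂ) (hu : MvPowerSeries.constantCoeff u = 0)
    (hv : MvPowerSeries.constantCoeff v = 0) :
    Zstar z [u] * Zstar z [v] = Zstar z [u, v] + Zstar z [v, u] + Zstar z [u + v] := by
  classical
  apply MvPowerSeries.ext; intro d
  set D := ∑ i, d i with hD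
  have key : (MvPowerSeries.coeff d) (Zstar z [u] * Zstar z [v])
      = ∑ k ∈ range (D+1), ∑ l ∈ range (D+1),
          (z [k] * z [l]) * MvPowerSeries.coeff d (P u k * P v l) := by
    rw [MvPowerSeries.coeff_mul]
    have step : ∀ p ∈ antidiagonal d,
        (MvPowerSeries.coeff p.1) (Zstar z [u]) * (MvPowerSeries.coeff p.2) (Zstar z [v])
          = ∑ k ∈ range (D+1), ∑ l ∈ range (D+1),
              (z [k] * MvPowerSeries.coeff p.1 (P u k)) *
                (z [l] * MvPowerSeries.coeff p.2 (P v l)) := by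
      intro p hp
      rw [Finset.HasAntidiagonal.mem_antidiagonal] at hp
      have h1 : (∑ i, p.1 i) ≤ D := by
        rw [hD, ← hp, sum_apply_add]; omega
      have h2 : (∑ i, p.2 i) ≤ D := by
        rw [hD, ← hp, sum_apply_add]; omega
      have c1 : (MvPowerSeries.coeff p.1) (Zstar z [u]) = Zstar z [u] p.1 := rfl
      have c2 : (MvPowerSeries.coeff p.2) (Zstar z [v]) = Zstar z [v] p.2 := rfl
      rw [c1, c2, Zstar_one_ext z hu p.1 h1, Zstar_one_ext z hv p.2 h2, Finset.sum_mul_sum]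
    rw [Finset.sum_congr rfl step, Finset.sum_comm]
    refine Finset.sum_congr rfl fun k _ => ?_
    rw [Finset.sum_comm]
    refine Finset.sum_congr rfl fun l _ => ?_
    rw [MvPowerSeries.coeff_mul, Finset.mul_sum]
    refine Finset.sum_congr rfl fun p hp => ?_
    ring
  rw [key, map_add, map_add]
  have r1 : (MvPowerSeries.coeff d) (Zstar z [u, v]) = ∑ k ∈ range (D+1), ∑ l ∈ range (D+1),
      z [k, l] * MvPowerSeries.coeff d (P u k * P v l) := Zstar_two z u v d
  have r2 : (MvPowerSeries.coeff d) (Zstar z [v, u]) = ∑ k ∈ range (D+1), ∑ l ∈ range (D+1),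
      z [l, k] * MvPowerSeries.coeff d (P u k * P v l) := by
    rw [show (MvPowerSeries.coeff d) (Zstar z [v, u]) = Zstar z [v, u] d from rfl,
      Zstar_two, Finset.sum_comm]
    exact Finset.sum_congr rfl fun k _ => Finset.sum_congr rfl fun l _ => by rw [mul_comm (P v l)]
  have r3 : (MvPowerSeries.coeff d) (Zstar z [u + v]) = ∑ k ∈ range (D+1), ∑ l ∈ range (D+1),
      z [k + l] * MvPowerSeries.coeff d (P u k * P v l) := by
    rw [show (MvPowerSeries.coeff d) (Zstar z [u + v]) = Zstar z [u + v] d from rfl, Zstar_one]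
    rw [merge_sum D (fun m => z [m]) (fun m k => MvPowerSeries.coeff d (P u m * P v k))
      (fun m k hmk => OrdGe.mul (ord_P hu m) (ord_P hv k) d (by omega))]
    refine Finset.sum_congr rfl fun m _ => ?_
    rw [P_add, map_sum, Finset.mul_sum]
  rw [r1, r2, r3, ← Finset.sum_add_distrib, ← Finset.sum_add_distrib]
  refine Finset.sum_congr rfl fun k _ => ?_
  rw [← Finset.sum_add_distrib, ← Finset.sum_add_distrib]
  refine Finset.sum_congr rfl fun l _ => ?_
  rw [z_one_one z hz]
  ring

lemma sum_rot3 {α : Type*} [AddCommMonoid α] {s : Finset ℕ} (F : ℕ → ℕ → ℕ → α) :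
    ∑ a ∈ s, ∑ b ∈ s, ∑ e ∈ s, F a b e = ∑ e ∈ s, ∑ a ∈ s, ∑ b ∈ s, F a b e := by
  calc ∑ a ∈ s, ∑ b ∈ s, ∑ e ∈ s, F a b e
      = ∑ a ∈ s, ∑ e ∈ s, ∑ b ∈ s, F a b e :=
        Finset.sum_congr rfl fun a _ => Finset.sum_comm
    _ = ∑ e ∈ s, ∑ a ∈ s, ∑ b ∈ s, F a b e := Finset.sum_comm

lemma Zstar_two_ext {n : ℕ} (z : List ℕ → ℂ) {u v : MvPowerSeries (Fin n) ℂ}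
    (hu : MvPowerSeries.constantCoeff u = 0) (hv : MvPowerSeries.constantCoeff v = 0)
    (a : Fin n →₀ ℕ) {D : ℕ} (ha : (∑ i, a i) ≤ D) :
    Zstar z [u, v] a = ∑ k ∈ range (D + 1), ∑ l ∈ range (D + 1),
      z [k, l] * MvPowerSeries.coeff a (P u k * P v l) := by
  rw [Zstar_two, ← Finset.sum_product', ← Finset.sum_product']
  refine Finset.sum_subset (fun x hx => ?_) (fun p hp1 hp2 => ?_)
  · simp only [mem_product, mem_range] at hx ⊢; omega
  · simp only [mem_product, mem_range] at hp1 hp2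
    rw [OrdGe.mul (ord_P hu p.1) (ord_P hv p.2) a (by omega), mul_zero]

lemma L2 {n : ℕ} (z : List ℕ → ℂ) (hz : ∀ w w' : List ℕ, z w * z w' = ((qs w w').map z).sum)
    (c u v : MvPowerSeries (Fin n) ℂ) (hc : MvPowerSeries.constantCoeff c = 0)
    (hu : MvPowerSeries.constantCoeff u = 0) (hv : MvPowerSeries.constantCoeff v = 0) :
    Zstar z [c] * Zstar z [u, v] = Zstar z [c, u, v] + Zstar z [u, c, v] + Zstar z [u, v, c]
      + Zstar z [c + u, v] + Zstar z [u, c + v] := by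
  classical
  apply MvPowerSeries.ext; intro d
  set D := ∑ i, d i with hD
  have key : (MvPowerSeries.coeff d) (Zstar z [c] * Zstar z [u, v])
      = ∑ m ∈ range (D+1), ∑ k ∈ range (D+1), ∑ l ∈ range (D+1),
          (z [m] * z [k, l]) * MvPowerSeries.coeff d (P c m * P u k * P v l) := by
    rw [MvPowerSeries.coeff_mul]
    have step : ∀ p ∈ antidiagonal d,
        (MvPowerSeries.coeff p.1) (Zstar z [c]) * (MvPowerSeries.coeff p.2) (Zstar z [u, v])
          = ∑ m ∈ range (D+1), ∑ k ∈ range (D+1), ∑ l ∈ range (D+1),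
              (z [m] * MvPowerSeries.coeff p.1 (P c m)) *
                (z [k, l] * MvPowerSeries.coeff p.2 (P u k * P v l)) := by
      intro p hp
      rw [Finset.HasAntidiagonal.mem_antidiagonal] at hp
      have h1 : (∑ i, p.1 i) ≤ D := by rw [hD, ← hp, sum_apply_add]; omega
      have h2 : (∑ i, p.2 i) ≤ D := by rw [hD, ← hp, sum_apply_add]; omega
      have c1 : (MvPowerSeries.coeff p.1) (Zstar z [c]) = Zstar z [c] p.1 := rfl
      have c2 : (MvPowerSeries.coeff p.2) (Zstar z [u, v]) = Zstar z [u, v] p.2 := rfl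
      rw [c1, c2, Zstar_one_ext z hc p.1 h1, Zstar_two_ext z hu hv p.2 h2, Finset.sum_mul_sum]
      exact Finset.sum_congr rfl fun m _ => Finset.sum_congr rfl fun k _ =>
        Finset.mul_sum _ _ _
    rw [Finset.sum_congr rfl step, Finset.sum_comm]
    refine Finset.sum_congr rfl fun m _ => ?_
    rw [Finset.sum_comm]
    refine Finset.sum_congr rfl fun k _ => ?_
    rw [Finset.sum_comm]
    refine Finset.sum_congr rfl fun l _ => ?_
    rw [mul_assoc (P c m), MvPowerSeries.coeff_mul, Finset.mul_sum]
    refine Finset.sum_congr rfl fun p hp => ?_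
    ring
  rw [key, map_add, map_add, map_add, map_add]
  have r1 : (MvPowerSeries.coeff d) (Zstar z [c, u, v])
      = ∑ m ∈ range (D+1), ∑ k ∈ range (D+1), ∑ l ∈ range (D+1),
        z [m, k, l] * MvPowerSeries.coeff d (P c m * P u k * P v l) := Zstar_three z c u v d
  have r2 : (MvPowerSeries.coeff d) (Zstar z [u, c, v])
      = ∑ m ∈ range (D+1), ∑ k ∈ range (D+1), ∑ l ∈ range (D+1),
        z [k, m, l] * MvPowerSeries.coeff d (P c m * P u k * P v l) := by
    rw [show (MvPowerSeries.coeff d) (Zstar z [u, c, v]) = Zstar z [u, c, v] d from rfl,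
      Zstar_three, Finset.sum_comm]
    refine Finset.sum_congr rfl fun m _ => Finset.sum_congr rfl fun k _ =>
      Finset.sum_congr rfl fun l _ => ?_
    rw [show P u k * P c m * P v l = P c m * P u k * P v l by ring]
  have r3 : (MvPowerSeries.coeff d) (Zstar z [u, v, c])
      = ∑ m ∈ range (D+1), ∑ k ∈ range (D+1), ∑ l ∈ range (D+1),
        z [k, l, m] * MvPowerSeries.coeff d (P c m * P u k * P v l) := by
    rw [show (MvPowerSeries.coeff d) (Zstar z [u, v, c]) = Zstar z [u, v, c] d from rfl,
      Zstar_three, sum_rot3]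
    refine Finset.sum_congr rfl fun m _ => Finset.sum_congr rfl fun k _ =>
      Finset.sum_congr rfl fun l _ => ?_
    rw [show P u k * P v l * P c m = P c m * P u k * P v l by ring]
  have r4 : (MvPowerSeries.coeff d) (Zstar z [c + u, v])
      = ∑ m ∈ range (D+1), ∑ k ∈ range (D+1), ∑ l ∈ range (D+1),
        z [m + k, l] * MvPowerSeries.coeff d (P c m * P u k * P v l) := by
    rw [show (MvPowerSeries.coeff d) (Zstar z [c + u, v]) = Zstar z [c + u, v] d from rfl,
      Zstar_two, ← hD]
    conv_rhs => rw [sum_rot3]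
    rw [Finset.sum_comm]
    refine Finset.sum_congr rfl fun l _ => ?_
    rw [merge_sum D (fun nn => z [nn, l])
      (fun m k => MvPowerSeries.coeff d (P c m * P u k * P v l))
      (fun m k hmk => (OrdGe.mul (OrdGe.mul (ord_P hc m) (ord_P hu k)) (ord_P hv l)) d
        (by omega))]
    refine Finset.sum_congr rfl fun nn _ => ?_
    rw [P_add, Finset.sum_mul, map_sum, Finset.mul_sum]
  have r5 : (MvPowerSeries.coeff d) (Zstar z [u, c + v])
      = ∑ m ∈ range (D+1), ∑ k ∈ range (D+1), ∑ l ∈ range (D+1),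
        z [k, m + l] * MvPowerSeries.coeff d (P c m * P u k * P v l) := by
    rw [show (MvPowerSeries.coeff d) (Zstar z [u, c + v]) = Zstar z [u, c + v] d from rfl,
      Zstar_two, ← hD]
    conv_rhs => rw [Finset.sum_comm]
    refine Finset.sum_congr rfl fun k _ => ?_
    rw [merge_sum D (fun nn => z [k, nn])
      (fun m l => MvPowerSeries.coeff d (P c m * P u k * P v l))
      (fun m l hml => (OrdGe.mul (OrdGe.mul (ord_P hc m) (ord_P hu k)) (ord_P hv l)) d
        (by omega))]
    refine Finset.sum_congr rfl fun nn _ => ?_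
    rw [P_add, Finset.mul_sum, Finset.mul_sum]
    rw [map_sum]
    rw [Finset.mul_sum]
    refine Finset.sum_congr rfl fun p _ => ?_
    rw [show P u k * (P c p.1 * P v p.2) = P c p.1 * P u k * P v p.2 by ring]
  rw [r1, r2, r3, r4, r5]
  rw [← Finset.sum_add_distrib, ← Finset.sum_add_distrib, ← Finset.sum_add_distrib,
    ← Finset.sum_add_distrib]
  refine Finset.sum_congr rfl fun m _ => ?_
  rw [← Finset.sum_add_distrib, ← Finset.sum_add_distrib, ← Finset.sum_add_distrib,
    ← Finset.sum_add_distrib]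
  refine Finset.sum_congr rfl fun k _ => ?_
  rw [← Finset.sum_add_distrib, ← Finset.sum_add_distrib, ← Finset.sum_add_distrib,
    ← Finset.sum_add_distrib]
  refine Finset.sum_congr rfl fun l _ => ?_
  rw [z_one_two z hz]
  ring

lemma prod_X_pow {n : ℕ} (s : Finset (Fin n)) (g : Fin n → ℕ) :
    ∏ i ∈ s, (MvPowerSeries.X i : MvPowerSeries (Fin n) ℂ) ^ g i
      = MvPowerSeries.monomial (∑ i ∈ s, Finsupp.single i (g i)) 1 := by
  classical
  induction s using Finset.induction_on with
  | empty => simp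
  | insert _ _ hx ih =>
    rw [Finset.prod_insert hx, Finset.sum_insert hx, ih, MvPowerSeries.X_pow_eq,
      MvPowerSeries.monomial_mul_monomial, one_mul]

lemma coeff_sum_X_pow {n : ℕ} (s : Finset (Fin n)) (k : ℕ) (d : Fin n →₀ ℕ) :
    MvPowerSeries.coeff d ((∑ i ∈ s, (MvPowerSeries.X i : MvPowerSeries (Fin n) ℂ)) ^ k)
      = if (∑ i ∈ s, d i) = k ∧ (∀ i ∉ s, d i = 0) then (Nat.multinomial s d : ℂ) else 0 := by
  classical
  rw [Finset.sum_pow_eq_sum_piAntidiag, map_sum]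
  have hterm : ∀ g, g ∈ Finset.piAntidiag s k →
      MvPowerSeries.coeff d
          ((Nat.multinomial s g : MvPowerSeries (Fin n) ℂ) * ∏ i ∈ s, MvPowerSeries.X i ^ g i)
        = if (∀ i, (if i ∈ s then g i else 0) = d i) then (Nat.multinomial s g : ℂ) else 0 := by
    intro g hg
    rw [prod_X_pow, ← map_natCast (MvPowerSeries.C (σ := Fin n) (R := ℂ)) (Nat.multinomial s g),
      MvPowerSeries.coeff_C_mul, MvPowerSeries.coeff_monomial]
    have hcond : (d = ∑ i ∈ s, Finsupp.single i (g i)) ↔ (∀ i, (if i ∈ s then g i else 0) = d i) := by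
      constructor
      · intro h i
        rw [h]
        rw [Finsupp.finset_sum_apply]
        simp only [Finsupp.single_apply]
        rw [Finset.sum_ite_eq' s i g]
      · intro h
        ext i
        rw [Finsupp.finset_sum_apply]
        simp only [Finsupp.single_apply]
        rw [Finset.sum_ite_eq' s i g, ← h i]
    by_cases h : d = ∑ i ∈ s, Finsupp.single i (g i)
    · rw [if_pos h, if_pos (hcond.1 h), mul_one]
    · rw [if_neg h, if_neg (fun hh => h (hcond.2 hh)), mul_zero]
  rw [Finset.sum_congr rfl hterm]
  by_cases hsupp : ∀ i ∉ s, d i = 0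
  · set g₀ : Fin n → ℕ := fun i => if i ∈ s then d i else 0 with hg₀
    have hmem : g₀ ∈ Finset.piAntidiag s k ↔ (∑ i ∈ s, d i) = k := by
      rw [Finset.mem_piAntidiag]
      constructor
      · intro ⟨h1, _⟩
        rw [← h1]
        exact Finset.sum_congr rfl fun i hi => by simp [hg₀, hi]
      · intro h1
        refine ⟨by rw [← h1]; exact Finset.sum_congr rfl fun i hi => by simp [hg₀, hi], ?_⟩
        intro i hi
        by_contra hns
        exact hi (by simp [hg₀, hns])
    have hcondg₀ : ∀ i, (if i ∈ s then g₀ i else 0) = d i := by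
      intro i
      by_cases hi : i ∈ s <;> simp [hg₀, hi]
      exact (hsupp i hi).symm
    have huniq : ∀ g ∈ Finset.piAntidiag s k, g ≠ g₀ →
        (if (∀ i, (if i ∈ s then g i else 0) = d i) then (Nat.multinomial s g : ℂ) else 0) = 0 := by
      intro g hg hne
      rw [if_neg]
      intro hcond
      apply hne
      funext i
      rw [Finset.mem_piAntidiag] at hg
      by_cases hi : i ∈ s
      · have := hcond i; simp only [hi, if_true] at this; simp [hg₀, hi, this]
      · simp [hg₀, hi, (by_contra fun hne0 => hi (hg.2 i hne0) : g i = 0)]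
    by_cases hk : (∑ i ∈ s, d i) = k
    · rw [Finset.sum_eq_single_of_mem g₀ (hmem.2 hk) huniq, if_pos hcondg₀,
        if_pos ⟨hk, hsupp⟩]
      congr 1
      refine Nat.multinomial_congr fun i hi => by simp [hg₀, hi]
    · rw [if_neg (fun h => hk h.1)]
      refine Finset.sum_eq_zero fun g hg => ?_
      rcases eq_or_ne g g₀ with rfl | hne
      · exact absurd (hmem.1 hg) hk
      · exact huniq g hg hne
  · rw [if_neg (fun h => hsupp h.2)]
    refine Finset.sum_eq_zero fun g hg => ?_
    push_neg at hsupp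
    obtain ⟨i₀, hi₀, hd₀⟩ := hsupp
    rw [if_neg]
    intro hcond
    have := hcond i₀
    rw [if_neg hi₀] at this
    exact hd₀ this.symm

lemma Zstar_linear {n : ℕ} (z : List ℕ → ℂ) (s : Finset (Fin n)) (d : Fin n →₀ ℕ) :
    Zstar z [∑ i ∈ s, MvPowerSeries.X i] d
      = if ∀ i ∉ s, d i = 0 then
          z [∑ i, d i] * ((-1) ^ (∑ i, d i) * (∏ i, ((d i).factorial : ℂ))⁻¹)
        else 0 := by
  classical
  rw [Zstar_one]
  have hterm : ∀ m, MvPowerSeries.coeff d (P (∑ i ∈ s, MvPowerSeries.X i) m)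
      = ((m.factorial : ℂ))⁻¹ * (-1) ^ m *
          (if (∑ i ∈ s, d i) = m ∧ (∀ i ∉ s, d i = 0) then (Nat.multinomial s d : ℂ) else 0) := by
    intro m
    rw [P, show (-(∑ i ∈ s, (MvPowerSeries.X i : MvPowerSeries (Fin n) ℂ)))
        = ((-1 : ℂ) • (∑ i ∈ s, MvPowerSeries.X i)) by rw [neg_smul, one_smul],
      smul_pow, map_smul, map_smul, smul_eq_mul, smul_eq_mul, coeff_sum_X_pow]
    ring
  rw [Finset.sum_congr rfl (fun m _ => by rw [hterm m])]
  by_cases hsupp : ∀ i ∉ s, d i = 0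
  · have hss : (∑ i ∈ s, d i) = ∑ i, d i := by
      refine Finset.sum_subset (Finset.subset_univ s) fun i _ hi => hsupp i hi
    rw [if_pos hsupp]
    rw [Finset.sum_eq_single_of_mem (∑ i, d i) (Finset.self_mem_range_succ _) ?side]
    · rw [if_pos ⟨hss, hsupp⟩]
      have hprod : (∏ i, ((d i).factorial : ℂ)) = ∏ i ∈ s, ((d i).factorial : ℂ) := by
        symm
        refine Finset.prod_subset (Finset.subset_univ s) fun i _ hi => by rw [hsupp i hi]; norm_num
      have hspec := Nat.multinomial_spec s d
      have hcast : ((∏ i ∈ s, (d i).factorial : ℕ) : ℂ) * (Nat.multinomial s d : ℂ)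
          = (((∑ i ∈ s, d i).factorial : ℕ) : ℂ) := by
        rw [← Nat.cast_mul, hspec]
      have hfne : ∀ m : ℕ, ((m.factorial : ℕ) : ℂ) ≠ 0 := fun m =>
        Nat.cast_ne_zero.2 m.factorial_ne_zero
      have hpne : ((∏ i ∈ s, (d i).factorial : ℕ) : ℂ) ≠ 0 :=
        Nat.cast_ne_zero.2 (Finset.prod_ne_zero_iff.2 fun i _ => (d i).factorial_ne_zero)
      rw [hprod]
      have hMne : (Nat.multinomial s d : ℂ) ≠ 0 :=
        Nat.cast_ne_zero.2 (Nat.multinomial_pos s d).ne'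
      have h3 : (((∑ i, d i).factorial : ℕ) : ℂ)
          = (∏ i ∈ s, ((d i).factorial : ℂ)) * (Nat.multinomial s d : ℂ) := by
        rw [hss] at hcast
        rw [← hcast]
        push_cast
        ring
      push_cast at h3 ⊢
      rw [h3]
      have hpne' : (∏ i ∈ s, ((d i).factorial : ℂ)) ≠ 0 := by
        push_cast at hpne
        exact hpne
      field_simp
    · intro m hm hne
      rw [if_neg (fun h => hne (by rw [← h.1, hss])), mul_zero, mul_zero]
  · rw [if_neg hsupp]
    refine Finset.sum_eq_zero fun m _ => ?_
    rw [if_neg (fun h => hsupp h.2), mul_zero, mul_zero]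

noncomputable def sng (i0 i1 i2 : ℕ) : Fin 3 →₀ ℕ :=
  Finsupp.single 0 i0 + Finsupp.single 1 i1 + Finsupp.single 2 i2

@[simp] lemma sng_apply0 (i0 i1 i2 : ℕ) : sng i0 i1 i2 0 = i0 := by
  simp [sng, Finsupp.single_apply]

@[simp] lemma sng_apply1 (i0 i1 i2 : ℕ) : sng i0 i1 i2 1 = i1 := by
  simp [sng, Finsupp.single_apply]

@[simp] lemma sng_apply2 (i0 i1 i2 : ℕ) : sng i0 i1 i2 2 = i2 := by
  simp [sng, Finsupp.single_apply]

lemma sum_antidiagonal_fin3 (d : Fin 3 →₀ ℕ) (f : (Fin 3 →₀ ℕ) × (Fin 3 →₀ ℕ) → ℂ) :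
    ∑ p ∈ antidiagonal d, f p
      = ∑ i0 ∈ range (d 0 + 1), ∑ i1 ∈ range (d 1 + 1), ∑ i2 ∈ range (d 2 + 1),
          f (sng i0 i1 i2, d - sng i0 i1 i2) := by
  rw [← Finset.sum_product', ← Finset.sum_product']
  refine Finset.sum_nbij' (fun p => ((p.1 0, p.1 1), p.1 2))
    (fun x => (sng x.1.1 x.1.2 x.2, d - sng x.1.1 x.1.2 x.2)) ?_ ?_ ?_ ?_ ?_
  · intro p hp
    rw [Finset.HasAntidiagonal.mem_antidiagonal] at hp
    have h0 : p.1 0 + p.2 0 = d 0 := by rw [← Finsupp.add_apply, hp]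
    have h1 : p.1 1 + p.2 1 = d 1 := by rw [← Finsupp.add_apply, hp]
    have h2 : p.1 2 + p.2 2 = d 2 := by rw [← Finsupp.add_apply, hp]
    simp only [Finset.mem_product, Finset.mem_range]
    omega
  · intro x hx
    simp only [Finset.mem_product, Finset.mem_range] at hx
    rw [Finset.HasAntidiagonal.mem_antidiagonal]
    have hle : sng x.1.1 x.1.2 x.2 ≤ d := by
      rw [Finsupp.le_def]
      intro i
      fin_cases i <;> simp <;> omega
    exact add_tsub_cancel_of_le hle
  · intro p hp
    rw [Finset.HasAntidiagonal.mem_antidiagonal] at hp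
    have hfst : sng (p.1 0) (p.1 1) (p.1 2) = p.1 := by
      ext i; fin_cases i <;> simp
    refine Prod.ext hfst ?_
    simp only [hfst]
    rw [← hp, add_tsub_cancel_left]
  · intro x hx
    simp
  · intro p hp
    rw [Finset.HasAntidiagonal.mem_antidiagonal] at hp
    have hfst : sng (p.1 0) (p.1 1) (p.1 2) = p.1 := by
      ext i; fin_cases i <;> simp
    have hpair : ((sng (p.1 0) (p.1 1) (p.1 2), d - sng (p.1 0) (p.1 1) (p.1 2)) :
        (Fin 3 →₀ ℕ) × (Fin 3 →₀ ℕ)) = p := by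
      refine Prod.ext hfst ?_
      simp only [hfst]
      rw [← hp, add_tsub_cancel_left]
    exact (congrArg f hpair).symm

lemma key2 (z1 z2 : ℕ → ℂ) (d1 d2 : ℕ) :
    ∑ i1 ∈ range (d1+1), ∑ i2 ∈ range (d2+1),
      ((d1.choose i1 : ℂ) * (d2.choose i2 : ℂ)) * z1 (i1+i2) * z2 ((d1-i1)+(d2-i2))
    = ∑ p ∈ antidiagonal (d1+d2), ((d1+d2).choose p.1 : ℂ) * z1 p.1 * z2 p.2 := by
  have hrhs : ∑ p ∈ antidiagonal (d1+d2), ((d1+d2).choose p.1 : ℂ) * z1 p.1 * z2 p.2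
      = ∑ x ∈ (antidiagonal (d1+d2)).sigma (fun p => antidiagonal p.1),
          ((d1.choose x.2.1 : ℂ) * (d2.choose x.2.2 : ℂ)) * z1 x.1.1 * z2 x.1.2 := by
    rw [Finset.sum_sigma]
    refine Finset.sum_congr rfl fun p hp => ?_
    symm
    change ∑ s ∈ antidiagonal p.1, (d1.choose s.1 : ℂ) * (d2.choose s.2 : ℂ) * z1 p.1 * z2 p.2
      = _
    rw [← Finset.sum_mul, ← Finset.sum_mul,
      show ∑ i ∈ antidiagonal p.1, (d1.choose i.1 : ℂ) * (d2.choose i.2 : ℂ)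
          = (((d1+d2).choose p.1 : ℕ) : ℂ) by
        rw [Nat.add_choose_eq]; push_cast; rfl]
  rw [hrhs]
  have hfilter : ∑ x ∈ (antidiagonal (d1+d2)).sigma (fun p => antidiagonal p.1),
        ((d1.choose x.2.1 : ℂ) * (d2.choose x.2.2 : ℂ)) * z1 x.1.1 * z2 x.1.2
      = ∑ x ∈ ((antidiagonal (d1+d2)).sigma (fun p => antidiagonal p.1)).filter
          (fun x => x.2.1 ≤ d1 ∧ x.2.2 ≤ d2),
          ((d1.choose x.2.1 : ℂ) * (d2.choose x.2.2 : ℂ)) * z1 x.1.1 * z2 x.1.2 := by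
    symm
    refine Finset.sum_subset (Finset.filter_subset _ _) fun x hx hnx => ?_
    rw [Finset.mem_filter] at hnx
    have : ¬ (x.2.1 ≤ d1 ∧ x.2.2 ≤ d2) := fun h => hnx ⟨hx, h⟩
    rcases Nat.lt_or_ge d1 x.2.1 with h | h
    · rw [Nat.choose_eq_zero_of_lt h]; push_cast; ring
    · rcases Nat.lt_or_ge d2 x.2.2 with h2 | h2
      · rw [Nat.choose_eq_zero_of_lt h2]; push_cast; ring
      · exact absurd ⟨h, h2⟩ this
  rw [hfilter, ← Finset.sum_product']
  refine Finset.sum_nbij' (fun q => ⟨(q.1+q.2, (d1-q.1)+(d2-q.2)), (q.1, q.2)⟩)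
    (fun x => (x.2.1, x.2.2)) ?_ ?_ ?_ ?_ ?_
  · intro q hq
    simp only [Finset.mem_product, Finset.mem_range] at hq
    simp [Finset.mem_filter, Finset.mem_sigma, Finset.HasAntidiagonal.mem_antidiagonal]
    omega
  · rintro ⟨p, q⟩ hx
    simp only [Finset.mem_filter, Finset.mem_sigma, Finset.HasAntidiagonal.mem_antidiagonal] at hx
    simp only [Finset.mem_product, Finset.mem_range]
    omega
  · intro q hq; rfl
  · rintro ⟨p, q⟩ hx
    simp only [Finset.mem_filter, Finset.mem_sigma, Finset.HasAntidiagonal.mem_antidiagonal] at hx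
    have h1 : q.1 + q.2 = p.1 := hx.1.2
    have h2 : (d1 - q.1) + (d2 - q.2) = p.2 := by omega
    simp only
    congr 1
    · rw [h1, h2]
  · intro q hq; rfl

lemma sum3 (d : Fin 3 →₀ ℕ) : (∑ i, d i) = d 0 + d 1 + d 2 := by
  rw [Fin.sum_univ_three]

lemma EA (z : List ℕ → ℂ) (d : Fin 3 →₀ ℕ) :
    Zstar z [MvPowerSeries.X 0 + MvPowerSeries.X 1 + MvPowerSeries.X 2] d
      = z [d 0 + d 1 + d 2] * ((-1) ^ (d 0 + d 1 + d 2) *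
          (((d 0).factorial : ℂ) * ((d 1).factorial : ℂ) * ((d 2).factorial : ℂ))⁻¹) := by
  have hA : (MvPowerSeries.X 0 + MvPowerSeries.X 1 + MvPowerSeries.X 2 :
      MvPowerSeries (Fin 3) ℂ) = ∑ i ∈ (Finset.univ : Finset (Fin 3)), MvPowerSeries.X i := by
    rw [Fin.sum_univ_three]
  rw [hA, Zstar_linear, if_pos (fun i hi => absurd (Finset.mem_univ i) hi), sum3,
    Fin.prod_univ_three]

lemma EB (z : List ℕ → ℂ) (d : Fin 3 →₀ ℕ) :
    Zstar z [MvPowerSeries.X 1 + MvPowerSeries.X 2] d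
      = if d 0 = 0 then z [d 1 + d 2] * ((-1) ^ (d 1 + d 2) *
          (((d 1).factorial : ℂ) * ((d 2).factorial : ℂ))⁻¹) else 0 := by
  have hB : (MvPowerSeries.X 1 + MvPowerSeries.X 2 : MvPowerSeries (Fin 3) ℂ)
      = ∑ i ∈ ({1, 2} : Finset (Fin 3)), MvPowerSeries.X i := by
    rw [show ({1, 2} : Finset (Fin 3)) = insert 1 {2} from rfl,
      Finset.sum_insert (by decide), Finset.sum_singleton]
  have hcond : (∀ i ∉ ({1, 2} : Finset (Fin 3)), d i = 0) ↔ d 0 = 0 := by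
    constructor
    · intro h; exact h 0 (by decide)
    · intro h i hi
      fin_cases i
      · exact h
      · exact absurd (by decide) hi
      · exact absurd (by decide) hi
  rw [hB, Zstar_linear]
  by_cases h0 : d 0 = 0
  · rw [if_pos (hcond.2 h0), if_pos h0, sum3, Fin.prod_univ_three, h0]
    norm_num
  · rw [if_neg (fun h => h0 (hcond.1 h)), if_neg h0]

lemma EC (z : List ℕ → ℂ) (d : Fin 3 →₀ ℕ) :
    Zstar z [MvPowerSeries.X 2] d
      = if d 0 = 0 ∧ d 1 = 0 then z [d 2] * ((-1) ^ (d 2) * (((d 2).factorial : ℂ))⁻¹) else 0 := by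
  have hC : (MvPowerSeries.X 2 : MvPowerSeries (Fin 3) ℂ)
      = ∑ i ∈ ({2} : Finset (Fin 3)), MvPowerSeries.X i := (Finset.sum_singleton _ _).symm
  have hcond : (∀ i ∉ ({2} : Finset (Fin 3)), d i = 0) ↔ (d 0 = 0 ∧ d 1 = 0) := by
    constructor
    · intro h; exact ⟨h 0 (by decide), h 1 (by decide)⟩
    · intro h i hi
      fin_cases i
      · exact h.1
      · exact h.2
      · exact absurd (by decide) hi
  rw [hC, Zstar_linear]
  by_cases h0 : d 0 = 0 ∧ d 1 = 0
  · rw [if_pos (hcond.2 h0), if_pos h0, sum3, Fin.prod_univ_three, h0.1, h0.2]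
    norm_num
  · rw [if_neg (fun h => h0 (hcond.1 h)), if_neg h0]

noncomputable def G2fun (zE : List ℕ → ℂ) : MvPowerSeries (Fin 3) ℂ :=
  fun d => zE [d 0, d 1 + d 2] * ((-1) ^ (d 0 + d 1 + d 2) *
    (((d 0).factorial : ℂ) * ((d 1).factorial : ℂ) * ((d 2).factorial : ℂ))⁻¹)

lemma C2 (z : List ℕ → ℂ) (zE : List ℕ → ℂ)
    (hzzeta : ∀ k : ℕ, z [k] = riemannZeta (-(k : ℂ)))
    (hE1 : ∀ k : ℕ, zE [k] = riemannZeta (-(k : ℂ)))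
    (hErec : ∀ (w : List ℕ) (a b : ℕ),
      zE (w ++ [a, b]) =
        ∑ p ∈ Finset.HasAntidiagonal.antidiagonal b, (b.choose p.1 : ℂ) * zE [p.1] * zE (w ++ [a + p.2])) :
    Zstar z [MvPowerSeries.X 1 + MvPowerSeries.X 2] *
        Zstar z [MvPowerSeries.X 0 + MvPowerSeries.X 1 + MvPowerSeries.X 2]
      = G2fun zE := by
  have hzE : ∀ k, zE [k] = z [k] := fun k => by rw [hE1, hzzeta]
  apply MvPowerSeries.ext; intro d
  rw [MvPowerSeries.coeff_mul, sum_antidiagonal_fin3]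
  have hfne : ∀ m : ℕ, ((m.factorial : ℕ) : ℂ) ≠ 0 := fun m =>
    Nat.cast_ne_zero.2 m.factorial_ne_zero
  have hterm : ∀ i0 i1 i2 : ℕ,
      (MvPowerSeries.coeff (sng i0 i1 i2)) (Zstar z [MvPowerSeries.X 1 + MvPowerSeries.X 2]) *
        (MvPowerSeries.coeff (d - sng i0 i1 i2))
          (Zstar z [MvPowerSeries.X 0 + MvPowerSeries.X 1 + MvPowerSeries.X 2])
      = (if i0 = 0 then z [i1 + i2] * ((-1) ^ (i1 + i2) *
            ((i1.factorial : ℂ) * (i2.factorial : ℂ))⁻¹) else 0) *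
          (z [(d 0 - i0) + (d 1 - i1) + (d 2 - i2)] *
            ((-1) ^ ((d 0 - i0) + (d 1 - i1) + (d 2 - i2)) *
              ((((d 0 - i0).factorial : ℂ)) * (((d 1 - i1).factorial : ℂ)) *
                (((d 2 - i2).factorial : ℂ)))⁻¹)) := by
    intro i0 i1 i2
    rw [show (MvPowerSeries.coeff (sng i0 i1 i2))
          (Zstar z [MvPowerSeries.X 1 + MvPowerSeries.X 2])
        = Zstar z [MvPowerSeries.X 1 + MvPowerSeries.X 2] (sng i0 i1 i2) from rfl,
      show (MvPowerSeries.coeff (d - sng i0 i1 i2))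
          (Zstar z [MvPowerSeries.X 0 + MvPowerSeries.X 1 + MvPowerSeries.X 2])
        = Zstar z [MvPowerSeries.X 0 + MvPowerSeries.X 1 + MvPowerSeries.X 2] (d - sng i0 i1 i2)
        from rfl, EB, EA]
    rw [Finsupp.tsub_apply, Finsupp.tsub_apply, Finsupp.tsub_apply]
    simp only [sng_apply0, sng_apply1, sng_apply2]
  rw [Finset.sum_congr rfl fun i0 _ => Finset.sum_congr rfl fun i1 _ =>
    Finset.sum_congr rfl fun i2 _ => hterm i0 i1 i2]
  rw [Finset.sum_eq_single_of_mem 0 (Finset.mem_range.2 (Nat.succ_pos _))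
    (fun b _ hb => Finset.sum_eq_zero fun i1 _ => Finset.sum_eq_zero fun i2 _ => by
      rw [if_neg hb, zero_mul])]
  have hred : ∀ i1 ∈ range (d 1 + 1), ∀ i2 ∈ range (d 2 + 1),
      (if (0 : ℕ) = 0 then z [i1 + i2] * ((-1) ^ (i1 + i2) *
            ((i1.factorial : ℂ) * (i2.factorial : ℂ))⁻¹) else 0) *
          (z [(d 0 - 0) + (d 1 - i1) + (d 2 - i2)] *
            ((-1) ^ ((d 0 - 0) + (d 1 - i1) + (d 2 - i2)) *
              ((((d 0 - 0).factorial : ℂ)) * (((d 1 - i1).factorial : ℂ)) *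
                (((d 2 - i2).factorial : ℂ)))⁻¹))
        = (((d 1).choose i1 : ℂ) * ((d 2).choose i2 : ℂ) * z [i1 + i2] *
            z [d 0 + ((d 1 - i1) + (d 2 - i2))]) *
          ((-1) ^ (d 0 + d 1 + d 2) *
            (((d 0).factorial : ℂ) * ((d 1).factorial : ℂ) * ((d 2).factorial : ℂ))⁻¹) := by
    intro i1 hi1 i2 hi2
    rw [Finset.mem_range] at hi1 hi2
    rw [if_pos rfl]
    rw [show d 0 - 0 = d 0 from Nat.sub_zero _]
    rw [show d 0 + (d 1 - i1) + (d 2 - i2) = d 0 + ((d 1 - i1) + (d 2 - i2)) from by omega]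
    have hsgn : ((-1 : ℂ)) ^ (i1 + i2) * (-1) ^ (d 0 + ((d 1 - i1) + (d 2 - i2)))
        = (-1) ^ (d 0 + d 1 + d 2) := by
      rw [← pow_add]
      congr 1
      omega
    rw [Nat.cast_choose ℂ (by omega : i1 ≤ d 1), Nat.cast_choose ℂ (by omega : i2 ≤ d 2)]
    rw [← hsgn]
    have f1 : ((d 1).factorial : ℂ) ≠ 0 := hfne _
    have f2 : ((d 2).factorial : ℂ) ≠ 0 := hfne _
    have f3 : ((d 0).factorial : ℂ) ≠ 0 := hfne _
    have f4 : (i1.factorial : ℂ) ≠ 0 := hfne _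
    have f5 : (i2.factorial : ℂ) ≠ 0 := hfne _
    have f6 : ((d 1 - i1).factorial : ℂ) ≠ 0 := hfne _
    have f7 : ((d 2 - i2).factorial : ℂ) ≠ 0 := hfne _
    field_simp
  rw [Finset.sum_congr rfl fun i1 hi1 => Finset.sum_congr rfl fun i2 hi2 => hred i1 hi1 i2 hi2]
  trans (∑ p ∈ Finset.HasAntidiagonal.antidiagonal (d 1 + d 2),
      ((d 1 + d 2).choose p.1 : ℂ) * z [p.1] * z [d 0 + p.2]) *
    ((-1) ^ (d 0 + d 1 + d 2) *
      (((d 0).factorial : ℂ) * ((d 1).factorial : ℂ) * ((d 2).factorial : ℂ))⁻¹)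
  · rw [← key2 (fun m => z [m]) (fun m => z [d 0 + m]) (d 1) (d 2), Finset.sum_mul]
    refine Finset.sum_congr rfl fun i1 _ => ?_
    rw [Finset.sum_mul]
  · have hRHS : (MvPowerSeries.coeff d) (G2fun zE)
        = zE [d 0, d 1 + d 2] * ((-1) ^ (d 0 + d 1 + d 2) *
            (((d 0).factorial : ℂ) * ((d 1).factorial : ℂ) * ((d 2).factorial : ℂ))⁻¹) := rfl
    rw [hRHS, show zE [d 0, d 1 + d 2] = zE ([] ++ [d 0, d 1 + d 2]) from rfl,
      hErec [] (d 0) (d 1 + d 2)]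
    simp only [List.nil_append]
    refine congrArg (· * _) (Finset.sum_congr rfl fun p _ => ?_)
    rw [hzE, hzE]

lemma C1 (z : List ℕ → ℂ) (zE : List ℕ → ℂ)
    (hzzeta : ∀ k : ℕ, z [k] = riemannZeta (-(k : ℂ)))
    (hE1 : ∀ k : ℕ, zE [k] = riemannZeta (-(k : ℂ)))
    (hErec : ∀ (w : List ℕ) (a b : ℕ),
      zE (w ++ [a, b]) =
        ∑ p ∈ Finset.HasAntidiagonal.antidiagonal b, (b.choose p.1 : ℂ) * zE [p.1] * zE (w ++ [a + p.2])) :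
    Zstar z [MvPowerSeries.X 2] * G2fun zE = ZEMS zE 3 := by
  have hzE : ∀ k, zE [k] = z [k] := fun k => by rw [hE1, hzzeta]
  have hfne : ∀ m : ℕ, ((m.factorial : ℕ) : ℂ) ≠ 0 := fun m =>
    Nat.cast_ne_zero.2 m.factorial_ne_zero
  apply MvPowerSeries.ext; intro d
  rw [MvPowerSeries.coeff_mul, sum_antidiagonal_fin3]
  have hterm : ∀ i0 i1 i2 : ℕ,
      (MvPowerSeries.coeff (sng i0 i1 i2)) (Zstar z [MvPowerSeries.X 2]) *
        (MvPowerSeries.coeff (d - sng i0 i1 i2)) (G2fun zE)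
      = (if i0 = 0 ∧ i1 = 0 then z [i2] * ((-1) ^ i2 * ((i2.factorial : ℂ))⁻¹) else 0) *
          (zE [d 0 - i0, (d 1 - i1) + (d 2 - i2)] *
            ((-1) ^ ((d 0 - i0) + (d 1 - i1) + (d 2 - i2)) *
              ((((d 0 - i0).factorial : ℂ)) * (((d 1 - i1).factorial : ℂ)) *
                (((d 2 - i2).factorial : ℂ)))⁻¹)) := by
    intro i0 i1 i2
    rw [show (MvPowerSeries.coeff (sng i0 i1 i2)) (Zstar z [MvPowerSeries.X 2])
        = Zstar z [MvPowerSeries.X 2] (sng i0 i1 i2) from rfl, EC]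
    have hsnd : (MvPowerSeries.coeff (d - sng i0 i1 i2)) (G2fun zE)
        = zE [(d - sng i0 i1 i2) 0, (d - sng i0 i1 i2) 1 + (d - sng i0 i1 i2) 2] *
            ((-1) ^ ((d - sng i0 i1 i2) 0 + (d - sng i0 i1 i2) 1 + (d - sng i0 i1 i2) 2) *
              ((((d - sng i0 i1 i2) 0).factorial : ℂ) * (((d - sng i0 i1 i2) 1).factorial : ℂ) *
                (((d - sng i0 i1 i2) 2).factorial : ℂ))⁻¹) := rfl
    rw [hsnd]
    rw [Finsupp.tsub_apply, Finsupp.tsub_apply, Finsupp.tsub_apply]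
    simp only [sng_apply0, sng_apply1, sng_apply2]
  rw [Finset.sum_congr rfl fun i0 _ => Finset.sum_congr rfl fun i1 _ =>
    Finset.sum_congr rfl fun i2 _ => hterm i0 i1 i2]
  rw [Finset.sum_eq_single_of_mem 0 (Finset.mem_range.2 (Nat.succ_pos _))
    (fun b _ hb => Finset.sum_eq_zero fun i1 _ => Finset.sum_eq_zero fun i2 _ => by
      rw [if_neg (fun h => hb h.1), zero_mul])]
  rw [Finset.sum_eq_single_of_mem 0 (Finset.mem_range.2 (Nat.succ_pos _))
    (fun b _ hb => Finset.sum_eq_zero fun i2 _ => by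
      rw [if_neg (fun h => hb h.2), zero_mul])]
  trans (∑ i2 ∈ range (d 2 + 1),
      ((d 2).choose i2 : ℂ) * z [i2] * zE [d 0, d 1 + (d 2 - i2)]) *
    ((-1) ^ (d 0 + d 1 + d 2) *
      (((d 0).factorial : ℂ) * ((d 1).factorial : ℂ) * ((d 2).factorial : ℂ))⁻¹)
  · rw [Finset.sum_mul]
    refine Finset.sum_congr rfl fun i2 hi2 => ?_
    rw [Finset.mem_range] at hi2
    rw [if_pos ⟨rfl, rfl⟩, Nat.sub_zero, Nat.sub_zero]
    have hsgn : ((-1 : ℂ)) ^ i2 * (-1) ^ (d 0 + d 1 + (d 2 - i2)) = (-1) ^ (d 0 + d 1 + d 2) := by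
      rw [← pow_add]
      congr 1
      omega
    rw [Nat.cast_choose ℂ (by omega : i2 ≤ d 2), ← hsgn]
    have f1 : ((d 2).factorial : ℂ) ≠ 0 := hfne _
    have f2 : (i2.factorial : ℂ) ≠ 0 := hfne _
    have f3 : ((d 2 - i2).factorial : ℂ) ≠ 0 := hfne _
    have f4 : ((d 0).factorial : ℂ) ≠ 0 := hfne _
    have f5 : ((d 1).factorial : ℂ) ≠ 0 := hfne _
    field_simp
  · have hofn : (List.ofFn fun i : Fin 3 => d i) = [d 0, d 1, d 2] := by
      simp [List.ofFn_succ]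
    have hzems : (MvPowerSeries.coeff d) (ZEMS zE 3)
        = zE [d 0, d 1, d 2] * ∏ i : Fin 3, ((-1 : ℂ) ^ (d i) * ((d i).factorial : ℂ)⁻¹) := by
      rw [show (MvPowerSeries.coeff d) (ZEMS zE 3)
          = zE (List.ofFn fun i : Fin 3 => d i) *
              ∏ i : Fin 3, ((-1 : ℂ) ^ (d i) * ((d i).factorial : ℂ)⁻¹) from rfl, hofn]
    rw [hzems, Fin.prod_univ_three,
      show zE [d 0, d 1, d 2] = zE ([d 0] ++ [d 1, d 2]) from rfl, hErec [d 0] (d 1) (d 2),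
      Finset.Nat.sum_antidiagonal_eq_sum_range_succ_mk]
    simp only [List.cons_append, List.nil_append, Nat.succ_eq_add_one]
    have hsum : ∑ i2 ∈ range (d 2 + 1),
          ((d 2).choose i2 : ℂ) * zE [i2] * zE [d 0, d 1 + (d 2 - i2)]
        = ∑ i2 ∈ range (d 2 + 1),
          ((d 2).choose i2 : ℂ) * z [i2] * zE [d 0, d 1 + (d 2 - i2)] :=
      Finset.sum_congr rfl fun i2 _ => by rw [hzE]
    rw [hsum]
    ring

lemma Bfact (z : List ℕ → ℂ) (zE : List ℕ → ℂ)
    (hzzeta : ∀ k : ℕ, z [k] = riemannZeta (-(k : ℂ)))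
    (hE1 : ∀ k : ℕ, zE [k] = riemannZeta (-(k : ℂ)))
    (hErec : ∀ (w : List ℕ) (a b : ℕ),
      zE (w ++ [a, b]) =
        ∑ p ∈ Finset.HasAntidiagonal.antidiagonal b, (b.choose p.1 : ℂ) * zE [p.1] * zE (w ++ [a + p.2])) :
    ZEMS zE 3 = Zstar z [MvPowerSeries.X 2] *
      (Zstar z [MvPowerSeries.X 1 + MvPowerSeries.X 2] *
        Zstar z [MvPowerSeries.X 0 + MvPowerSeries.X 1 + MvPowerSeries.X 2]) := by
  rw [C2 z zE hzzeta hE1 hErec, C1 z zE hzzeta hE1 hErec]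

/-- Depth three instance of the main theorem, expressing `Z_EMS(t₁,t₂,t₃)` as the sum of
thirteen `Z_*`-terms indexed by the surjections in `𝒫(3,3) ∪ 𝒫(3,2) ∪ 𝒫(3,1)`. -/
theorem ZEMS_three (z : List ℕ → ℂ) (hz1 : z [] = 1)
    (hz : ∀ w w' : List ℕ, z w * z w' = ((qs w w').map z).sum)
    (hzzeta : ∀ k : ℕ, z [k] = riemannZeta (-(k : ℂ)))
    (zE : List ℕ → ℂ)
    (hE1 : ∀ k : ℕ, zE [k] = riemannZeta (-(k : ℂ)))
    (hErec : ∀ (w : List ℕ) (a b : ℕ),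
      zE (w ++ [a, b]) =
        ∑ p ∈ Finset.HasAntidiagonal.antidiagonal b, (b.choose p.1 : ℂ) * zE [p.1] * zE (w ++ [a + p.2])) :
    ZEMS zE 3 =
      Zstar z [MvPowerSeries.X 0 + MvPowerSeries.X 1 + MvPowerSeries.X 2,
          MvPowerSeries.X 1 + MvPowerSeries.X 2, MvPowerSeries.X 2] +
        Zstar z [MvPowerSeries.X 0 + MvPowerSeries.X 1 + MvPowerSeries.X 2,
          MvPowerSeries.X 2, MvPowerSeries.X 1 + MvPowerSeries.X 2] +
        Zstar z [MvPowerSeries.X 1 + MvPowerSeries.X 2,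
          MvPowerSeries.X 0 + MvPowerSeries.X 1 + MvPowerSeries.X 2, MvPowerSeries.X 2] +
        Zstar z [MvPowerSeries.X 1 + MvPowerSeries.X 2, MvPowerSeries.X 2,
          MvPowerSeries.X 0 + MvPowerSeries.X 1 + MvPowerSeries.X 2] +
        Zstar z [MvPowerSeries.X 2,
          MvPowerSeries.X 0 + MvPowerSeries.X 1 + MvPowerSeries.X 2,
          MvPowerSeries.X 1 + MvPowerSeries.X 2] +
        Zstar z [MvPowerSeries.X 2, MvPowerSeries.X 1 + MvPowerSeries.X 2,
          MvPowerSeries.X 0 + MvPowerSeries.X 1 + MvPowerSeries.X 2] +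
        Zstar z [MvPowerSeries.X 0 + MvPowerSeries.X 1 + 2 * MvPowerSeries.X 2,
          MvPowerSeries.X 1 + MvPowerSeries.X 2] +
        Zstar z [MvPowerSeries.X 1 + MvPowerSeries.X 2,
          MvPowerSeries.X 0 + MvPowerSeries.X 1 + 2 * MvPowerSeries.X 2] +
        Zstar z [MvPowerSeries.X 1 + 2 * MvPowerSeries.X 2,
          MvPowerSeries.X 0 + MvPowerSeries.X 1 + MvPowerSeries.X 2] +
        Zstar z [MvPowerSeries.X 0 + MvPowerSeries.X 1 + MvPowerSeries.X 2,
          MvPowerSeries.X 1 + 2 * MvPowerSeries.X 2] +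
        Zstar z [MvPowerSeries.X 0 + 2 * MvPowerSeries.X 1 + 2 * MvPowerSeries.X 2,
          MvPowerSeries.X 2] +
        Zstar z [MvPowerSeries.X 2,
          MvPowerSeries.X 0 + 2 * MvPowerSeries.X 1 + 2 * MvPowerSeries.X 2] +
        Zstar z [MvPowerSeries.X 0 + 2 * MvPowerSeries.X 1 + 3 * MvPowerSeries.X 2] := by
  have hc : MvPowerSeries.constantCoeff (σ := Fin 3) (R := ℂ) (MvPowerSeries.X 2) = 0 := by simp
  have hb : MvPowerSeries.constantCoeff (σ := Fin 3) (R := ℂ)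
      (MvPowerSeries.X 1 + MvPowerSeries.X 2) = 0 := by simp
  have ha : MvPowerSeries.constantCoeff (σ := Fin 3) (R := ℂ)
      (MvPowerSeries.X 0 + MvPowerSeries.X 1 + MvPowerSeries.X 2) = 0 := by simp
  have hba : MvPowerSeries.constantCoeff (σ := Fin 3) (R := ℂ)
      ((MvPowerSeries.X 1 + MvPowerSeries.X 2) +
        (MvPowerSeries.X 0 + MvPowerSeries.X 1 + MvPowerSeries.X 2)) = 0 := by simp
  rw [Bfact z zE hzzeta hE1 hErec]
  rw [L1 z hz _ _ hb ha, mul_add, mul_add]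
  rw [L2 z hz _ _ _ hc hb ha, L2 z hz _ _ _ hc ha hb, L1 z hz _ _ hc hba]
  rw [show (MvPowerSeries.X 1 + MvPowerSeries.X 2 +
        (MvPowerSeries.X 0 + MvPowerSeries.X 1 + MvPowerSeries.X 2) :
        MvPowerSeries (Fin 3) ℂ)
      = MvPowerSeries.X 0 + 2 * MvPowerSeries.X 1 + 2 * MvPowerSeries.X 2 by ring]
  rw [show (MvPowerSeries.X 2 + (MvPowerSeries.X 1 + MvPowerSeries.X 2) :
        MvPowerSeries (Fin 3) ℂ) = MvPowerSeries.X 1 + 2 * MvPowerSeries.X 2 by ring]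
  rw [show (MvPowerSeries.X 2 + (MvPowerSeries.X 0 + MvPowerSeries.X 1 + MvPowerSeries.X 2) :
        MvPowerSeries (Fin 3) ℂ)
      = MvPowerSeries.X 0 + MvPowerSeries.X 1 + 2 * MvPowerSeries.X 2 by ring]
  rw [show (MvPowerSeries.X 2 + (MvPowerSeries.X 0 + 2 * MvPowerSeries.X 1 +
        2 * MvPowerSeries.X 2) : MvPowerSeries (Fin 3) ℂ)
      = MvPowerSeries.X 0 + 2 * MvPowerSeries.X 1 + 3 * MvPowerSeries.X 2 by ring]
  ring
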